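/- arXiv:1210.1392 — 4 statements merged into one kernel-verified Lean document; each statement's English description precedes it below -/
import Mathlib

section
/- Let $1<p,q<\infty$ and $r\in\mathbb{N}$. Then there exists a constant $c=c(p,q)>0$ such that for all $x=(x_1,\dots,x_r)\in\mathbb{R}^r$: $\left(\sum_{i=1}^r |1-x_i|^p\right)^{q/p} \ge \frac{r^{q/p}}{2} + c\left(\sum_{i=1}^r |x_i|^p\right)^{q/p} - q\, r^{q/p-1}\sum_{i=1}^r x_i$. -/
set_option maxHeartbeats 1000000

lemma aux_tangent {q a s : ℝ} (hq : 1 ≤ q) (ha : 0 ≤ a) (hs : 0 < s) :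
    s ^ q + q * s ^ (q - 1) * (a - s) ≤ a ^ q := by
  have hber := one_add_mul_self_le_rpow_one_add (s := a / s - 1)
    (by have : 0 ≤ a / s := div_nonneg ha hs.le; linarith) hq
  rw [add_sub_cancel] at hber
  have hsq : (0:ℝ) < s ^ q := Real.rpow_pos_of_pos hs q
  rw [Real.div_rpow ha hs.le] at hber
  have h2 : (1 + q * (a / s - 1)) * s ^ q ≤ a ^ q := by
    rw [← le_div_iff₀ hsq]; exact hber
  have hsq1 : s ^ (q - 1) = s ^ q / s := by
    rw [Real.rpow_sub hs, Real.rpow_one]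
  calc s ^ q + q * s ^ (q - 1) * (a - s)
      = (1 + q * (a / s - 1)) * s ^ q := by
        rw [hsq1]; field_simp
    _ ≤ a ^ q := h2

lemma aux_holder {p : ℝ} (hp : 1 ≤ p) {r : ℕ} (y : Fin r → ℝ) :
    ∑ i, y i ≤ (r : ℝ) ^ (1 - 1/p) * (∑ i, |y i| ^ p) ^ (1/p) := by
  have h := Real.inner_le_weight_mul_Lp_of_nonneg Finset.univ hp (fun _ => (1:ℝ))
    (fun i => |y i|) (fun _ => zero_le_one) (fun i => abs_nonneg _)
  simp only [one_mul, Finset.sum_const, Finset.card_univ, Fintype.card_fin, nsmul_eq_mul,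
    mul_one] at h
  rw [one_div]
  calc ∑ i, y i ≤ ∑ i, |y i| := Finset.sum_le_sum fun i _ => le_abs_self _
    _ ≤ _ := by simpa using h

theorem stmt0 (p q : ℝ) (hp : 1 < p) (hq : 1 < q) :
    ∃ c : ℝ, 0 < c ∧ ∀ (r : ℕ), 0 < r → ∀ x : Fin r → ℝ,
      (∑ i, |1 - x i| ^ p) ^ (q / p) ≥
        (r : ℝ) ^ (q / p) / 2 + c * (∑ i, |x i| ^ p) ^ (q / p)
          - q * (r : ℝ) ^ (q / p - 1) * ∑ i, x i := by
  have hp0 : (0:ℝ) < p := by linarith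
  have hq0 : (0:ℝ) < q := by linarith
  -- the big constant M
  set M : ℝ := max (2 * q) (max 2 ((4 * q) ^ (1 / (q - 1)))) with hMdef
  have hM2 : (2:ℝ) ≤ M := le_trans (le_max_left _ _) (le_max_right _ _)
  have hM0 : (0:ℝ) < M := by linarith
  have hM2q : 2 * q ≤ M := le_max_left _ _
  have hMq : 4 * q ≤ M ^ (q - 1) := by
    have h1 : (4 * q) ^ (1 / (q - 1)) ≤ M := le_trans (le_max_right _ _) (le_max_right _ _)
    have h4q : (0:ℝ) ≤ 4 * q := by linarith
    calc 4 * q = ((4 * q) ^ (1 / (q - 1))) ^ (q - 1) := by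
          rw [← Real.rpow_mul h4q, one_div, inv_mul_cancel₀ (by linarith : q - 1 ≠ 0),
            Real.rpow_one]
      _ ≤ M ^ (q - 1) := Real.rpow_le_rpow (Real.rpow_nonneg h4q _) h1 (by linarith)
  have hMqpos : (0:ℝ) < M ^ q := Real.rpow_pos_of_pos hM0 q
  refine ⟨min (1/8) (1 / (2 * M ^ q)), lt_min (by norm_num) (by positivity), ?_⟩
  set c : ℝ := min (1/8) (1 / (2 * M ^ q)) with hcdef
  have hc8 : c ≤ 1/8 := min_le_left _ _
  have hcM : c ≤ 1 / (2 * M ^ q) := min_le_right _ _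
  have hc0 : 0 < c := lt_min (by norm_num) (by positivity)
  intro r hr x
  set R : ℝ := (r : ℝ) with hRdef
  have hR : (0:ℝ) < R := by rw [hRdef]; exact_mod_cast hr
  set B : ℝ := ∑ i, |1 - x i| ^ p with hBdef
  set C : ℝ := ∑ i, |x i| ^ p with hCdef
  have hB0 : 0 ≤ B := Finset.sum_nonneg fun i _ => Real.rpow_nonneg (abs_nonneg _) p
  have hC0 : 0 ≤ C := Finset.sum_nonneg fun i _ => Real.rpow_nonneg (abs_nonneg _) p
  set u : ℝ := B ^ (1/p) with hudef
  set A : ℝ := C ^ (1/p) with hAdef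
  set T : ℝ := ∑ i, x i with hTdef
  set ρ : ℝ := R ^ (1/p) with hρdef
  have hρ0 : (0:ℝ) < ρ := Real.rpow_pos_of_pos hR _
  have hu0 : 0 ≤ u := Real.rpow_nonneg hB0 _
  have hA0 : 0 ≤ A := Real.rpow_nonneg hC0 _
  -- rewrite goal in terms of u, A, ρ
  have hqp : q / p = 1/p * q := by ring
  have hBq : B ^ (q/p) = u ^ q := by rw [hqp, Real.rpow_mul hB0]
  have hCq : C ^ (q/p) = A ^ q := by rw [hqp, Real.rpow_mul hC0]
  have hRq : R ^ (q/p) = ρ ^ q := by rw [hqp, Real.rpow_mul hR.le]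
  have hRq1 : R ^ (q/p - 1) = ρ ^ q / R := by
    rw [Real.rpow_sub hR, Real.rpow_one, hRq]
  rw [ge_iff_le, hBq, hCq, hRq, hRq1]
  have hρq0 : (0:ℝ) < ρ ^ q := Real.rpow_pos_of_pos hρ0 _
  have hR1p : R ^ (1 - 1/p) = R / ρ := by
    rw [Real.rpow_sub hR, Real.rpow_one]
  -- (F1) convexity lower bound
  have hF1 : ρ ^ q - q * (ρ ^ q / R) * T ≤ u ^ q := by
    have hhold := aux_holder hp.le (fun i => 1 - x i)
    have hsum1 : ∑ i, (1 - x i) = R - T := by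
      rw [Finset.sum_sub_distrib]
      simp [hRdef, hTdef]
    rw [hsum1, hR1p] at hhold
    -- hhold : R - T ≤ R / ρ * u
    have hL : ρ - ρ / R * T ≤ u := by
      have h := mul_le_mul_of_nonneg_right hhold (le_of_lt (div_pos hρ0 hR))
      have he : R / ρ * u * (ρ / R) = u := by field_simp
      rw [he] at h
      calc ρ - ρ / R * T = (R - T) * (ρ / R) := by field_simp
        _ ≤ u := h
    have htan := aux_tangent hq.le hu0 hρ0
    have hρq1 : ρ ^ (q - 1) = ρ ^ q / ρ := by
      rw [Real.rpow_sub hρ0, Real.rpow_one]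
    have hmono : q * ρ ^ (q - 1) * (-(ρ / R * T)) ≤ q * ρ ^ (q - 1) * (u - ρ) := by
      apply mul_le_mul_of_nonneg_left (by linarith) (by positivity)
    have heq : q * ρ ^ (q - 1) * (-(ρ / R * T)) = -(q * (ρ ^ q / R) * T) := by
      rw [hρq1]; field_simp
    linarith
  -- (F2) triangle inequality : A ≤ u + ρ
  have hF2 : A ≤ u + ρ := by
    have h := Real.Lp_add_le Finset.univ (fun i => x i - 1) (fun _ => (1:ℝ)) hp.le
    have e1 : ∀ i : Fin r, x i - 1 + 1 = x i := fun i => by ring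
    have e2 : (∑ i : Fin r, |x i - 1 + 1| ^ p) = C := by
      simp only [e1]; rfl
    have e3 : (∑ i : Fin r, |x i - 1| ^ p) = B := by
      apply Finset.sum_congr rfl; intro i _; rw [abs_sub_comm]
    have e4 : (∑ i : Fin r, |(1:ℝ)| ^ p) = R := by
      simp [hRdef]
    simp only [e2, e3, e4] at h
    exact h
  -- Hölder bound on -T
  have hTbound : -T ≤ R / ρ * A := by
    have h := aux_holder hp.le (fun i => -x i)
    simp only [abs_neg] at h
    rw [hR1p] at h
    calc -T = ∑ i, -x i := by rw [hTdef, ← Finset.sum_neg_distrib]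
      _ ≤ R / ρ * A := h
  rcases le_or_gt A (M * ρ) with hcase | hcase
  · -- small A
    have hAq : A ^ q ≤ M ^ q * ρ ^ q := by
      rw [← Real.mul_rpow hM0.le hρ0.le]
      exact Real.rpow_le_rpow hA0 hcase hq0.le
    have h1 : c * A ^ q ≤ ρ ^ q / 2 := by
      calc c * A ^ q ≤ (1 / (2 * M ^ q)) * (M ^ q * ρ ^ q) :=
            mul_le_mul hcM hAq (by positivity) (by positivity)
        _ = ρ ^ q / 2 := by field_simp
    linarith
  · -- large A
    have hApos : 0 < A := lt_trans (mul_pos hM0 hρ0) hcase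
    have hρA : ρ ≤ A / M := by rw [le_div_iff₀ hM0]; linarith [hcase]
    have huA : A * (1 - 1/M) ≤ u := by
      have h1 : A / M ≥ ρ := hρA
      have : A - ρ ≤ u := by linarith [hF2]
      have h2 : A * (1 - 1/M) = A - A/M := by field_simp
      have h3 : A - A/M ≤ A - ρ := by linarith
      linarith
    have h1M : (0:ℝ) ≤ 1 - 1/M := by
      have h : 1/M ≤ 1/2 := by
        rw [div_le_div_iff₀ hM0 zero_lt_two]; linarith
      linarith
    have huq : A ^ q * (1 - 1/M) ^ q ≤ u ^ q := by
      rw [← Real.mul_rpow hA0 h1M]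
      exact Real.rpow_le_rpow (mul_nonneg hA0 h1M) huA hq0.le
    -- Bernoulli: (1 - 1/M)^q ≥ 1/2
    have hber : (1:ℝ)/2 ≤ (1 - 1/M) ^ q := by
      have h := one_add_mul_self_le_rpow_one_add (s := -(1/M)) (by
        have : 0 < 1/M := by positivity
        linarith) hq.le
      have he : (1:ℝ) + -(1/M) = 1 - 1/M := by ring
      rw [he] at h
      have hqM : q * (1/M) ≤ 1/2 := by
        rw [mul_one_div, div_le_iff₀ hM0]
        linarith
      linarith
    have hhalf : A ^ q / 2 ≤ u ^ q := by
      have h0 : (0:ℝ) ≤ A ^ q := Real.rpow_nonneg hA0 q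
      have hm := mul_le_mul_of_nonneg_left hber h0
      linarith
    -- bound the T-term
    have hterm : q * (ρ ^ q / R) * (-T) ≤ A ^ q / 4 := by
      have s1 : q * (ρ ^ q / R) * (-T) ≤ q * (ρ ^ q / R) * (R / ρ * A) :=
        mul_le_mul_of_nonneg_left hTbound (by positivity)
      have hρq1 : ρ ^ (q - 1) = ρ ^ q / ρ := by
        rw [Real.rpow_sub hρ0, Real.rpow_one]
      have s2 : q * (ρ ^ q / R) * (R / ρ * A) = q * (ρ ^ (q-1) * A) := by
        rw [hρq1]; field_simp
      have s3 : ρ ^ (q-1) ≤ (A / M) ^ (q-1) :=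
        Real.rpow_le_rpow hρ0.le hρA (by linarith)
      have s4 : (A / M) ^ (q-1) = A ^ (q-1) / M ^ (q-1) := Real.div_rpow hA0 hM0.le (q-1)
      have s5 : A ^ (q-1) * A = A ^ q := by
        rw [← Real.rpow_add_one hApos.ne' (q-1), sub_add_cancel]
      have hMq1pos : 0 < M ^ (q-1) := Real.rpow_pos_of_pos hM0 _
      have s6 : q * (ρ ^ (q-1) * A) ≤ q * (A ^ (q-1) / M ^ (q-1) * A) := by
        apply mul_le_mul_of_nonneg_left _ hq0.le
        apply mul_le_mul_of_nonneg_right _ hA0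
        rw [← s4]; exact s3
      have s7 : q * (A ^ (q-1) / M ^ (q-1) * A) ≤ q * (A ^ q / (4 * q)) := by
        apply mul_le_mul_of_nonneg_left _ hq0.le
        rw [div_mul_eq_mul_div, s5]
        exact div_le_div_of_nonneg_left (Real.rpow_nonneg hA0 q)
          (by linarith : (0:ℝ) < 4 * q) hMq
      have s8 : q * (A ^ q / (4 * q)) = A ^ q / 4 := by field_simp
      linarith
    have hcA : c * A ^ q ≤ A ^ q / 8 := by
      have : (0:ℝ) < A ^ q := Real.rpow_pos_of_pos hApos q
      nlinarith
    linarith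
end

section
/- Let $2\le p_1\le p_2<\infty$, $2\le q_1\le q_2<\infty$, with $\lambda(\mathbf p)=(\frac{1}{p_1}-\frac{1}{p_2})/(\frac12-\frac{1}{p_2})$ when $p_2>2$ (and $=1$ if $p_2=2$), and $\lambda(\mathbf p)\le\lambda(\mathbf q)$. Then for every matrix $x=(x_{ij})_{1\le i\le m,1\le j\le k}$ we have $\|x\|_{l^{m,k}_{p_1',q_1'}} \le \|x\|_{l^{m,k}_{2,2}}^{\lambda(\mathbf p)}\, \|x\|_{l^{m,k}_{p_2',q_2'}}^{1-\lambda(\mathbf p)}$. -/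
open Finset NNReal

lemma mySumRpowLe {ι : Type*} (t : Finset ι) (w : ι → ℝ≥0) {s : ℝ}
    (hs0 : 0 < s) (hs1 : s ≤ 1) :
    (∑ i ∈ t, w i) ^ s ≤ ∑ i ∈ t, w i ^ s := by
  induction t using Finset.cons_induction with
  | empty => simp [NNReal.zero_rpow hs0.ne']
  | cons a t ha ih =>
      rw [Finset.sum_cons, Finset.sum_cons]
      exact le_trans (NNReal.rpow_add_le_add_rpow _ _ hs0.le hs1) (by gcongr)

lemma mySumLeRpow {ι : Type*} (t : Finset ι) (w : ι → ℝ≥0) {s : ℝ}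
    (hs0 : 0 < s) (hs1 : s ≤ 1) :
    ∑ i ∈ t, w i ≤ (∑ i ∈ t, w i ^ s) ^ (1/s) := by
  have h := mySumRpowLe t w hs0 hs1
  calc ∑ i ∈ t, w i = ((∑ i ∈ t, w i) ^ s) ^ (1/s) := by
        rw [← NNReal.rpow_mul, mul_one_div, div_self hs0.ne', NNReal.rpow_one]
    _ ≤ (∑ i ∈ t, w i ^ s) ^ (1/s) := by gcongr

lemma myLpMono {ι : Type*} (t : Finset ι) (f : ι → ℝ≥0) {p r : ℝ}
    (hp : 0 < p) (hpr : p ≤ r) :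
    (∑ i ∈ t, f i ^ r) ^ (1/r) ≤ (∑ i ∈ t, f i ^ p) ^ (1/p) := by
  have hr : 0 < r := hp.trans_le hpr
  have h := mySumRpowLe t (fun i => f i ^ r) (s := p/r) (by positivity)
    (by rw [div_le_one hr]; exact hpr)
  simp_rw [← NNReal.rpow_mul] at h
  have h2 : ∀ i, f i ^ (r * (p/r)) = f i ^ p := by
    intro i; congr 1; field_simp
  simp_rw [h2] at h
  calc (∑ i ∈ t, f i ^ r) ^ (1/r)
      = ((∑ i ∈ t, f i ^ r) ^ (p/r)) ^ (1/p) := by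
        rw [← NNReal.rpow_mul]; congr 1; field_simp
    _ ≤ (∑ i ∈ t, f i ^ p) ^ (1/p) := by gcongr

lemma myInterp {ι : Type*} (t : Finset ι) (f g : ι → ℝ≥0) (L p q r : ℝ)
    (hL0 : 0 ≤ L) (hL1 : L ≤ 1) (hp : 0 < p) (hq : 0 < q) (hr : 0 < r)
    (hcond : 1 ≤ L*r/p + (1-L)*r/q) :
    (∑ i ∈ t, f i ^ (L*r) * g i ^ ((1-L)*r)) ^ (1/r)
      ≤ (∑ i ∈ t, f i ^ p) ^ (L/p) * (∑ i ∈ t, g i ^ q) ^ ((1-L)/q) := by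
  rcases eq_or_lt_of_le hL0 with h0 | h0
  · -- L = 0
    subst h0
    simp only [zero_mul, NNReal.rpow_zero, one_mul, sub_zero, zero_div]
    rw [zero_mul, zero_div, sub_zero, one_mul, zero_add] at hcond
    exact myLpMono t g hq ((one_le_div hq).mp hcond)
  rcases eq_or_lt_of_le hL1 with h1 | h1
  · -- L = 1
    subst h1
    simp only [one_mul, sub_self, zero_mul, NNReal.rpow_zero, mul_one, zero_div]
    rw [one_mul, sub_self, zero_mul, zero_div, add_zero] at hcond
    exact myLpMono t f hp ((one_le_div hp).mp hcond)
  have hL0' : 0 < L := h0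
  have hL1' : 0 < 1 - L := by linarith
  set a : ℝ := p / (L*r) with ha_def
  set b : ℝ := q / ((1-L)*r) with hb_def
  have ha : 0 < a := by positivity
  have hb : 0 < b := by positivity
  have hinv : 1/a + 1/b = L*r/p + (1-L)*r/q := by
    rw [ha_def, hb_def, one_div_div, one_div_div]
  set s : ℝ := 1/(1/a + 1/b) with hs_def
  have hsum_pos : 0 < 1/a + 1/b := by positivity
  have hs0 : 0 < s := by positivity
  have hs1 : s ≤ 1 := by
    rw [hs_def, div_le_one hsum_pos, hinv]; exact hcond
  have hconj : Real.HolderConjugate (a/s) (b/s) := by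
    rw [Real.holderConjugate_iff]; constructor
    · have has : a / s = 1 + a / b := by
        rw [hs_def]
        field_simp
      rw [has]
      have : 0 < a / b := by positivity
      linarith
    · rw [hs_def]
      field_simp
  have e1 : ∀ i : ι, (f i ^ (L*r*s)) ^ (a/s) = f i ^ p := by
    intro i
    rw [← NNReal.rpow_mul]
    congr 1
    rw [ha_def]
    field_simp
  have e2 : ∀ i : ι, (g i ^ ((1-L)*r*s)) ^ (b/s) = g i ^ q := by
    intro i
    rw [← NNReal.rpow_mul]
    congr 1
    rw [hb_def]
    field_simp
  have hstep2 : ∑ i ∈ t, (f i ^ (L*r) * g i ^ ((1-L)*r)) ^ s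
      ≤ (∑ i ∈ t, f i ^ p) ^ (s/a) * (∑ i ∈ t, g i ^ q) ^ (s/b) := by
    calc ∑ i ∈ t, (f i ^ (L*r) * g i ^ ((1-L)*r)) ^ s
        = ∑ i ∈ t, (f i ^ (L*r*s)) * (g i ^ ((1-L)*r*s)) :=
          Finset.sum_congr rfl fun i _ => by
            rw [NNReal.mul_rpow, ← NNReal.rpow_mul, ← NNReal.rpow_mul]
      _ ≤ (∑ i ∈ t, (f i ^ (L*r*s)) ^ (a/s)) ^ (1/(a/s)) *
            (∑ i ∈ t, (g i ^ ((1-L)*r*s)) ^ (b/s)) ^ (1/(b/s)) :=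
          NNReal.inner_le_Lp_mul_Lq t _ _ hconj
      _ = (∑ i ∈ t, f i ^ p) ^ (s/a) * (∑ i ∈ t, g i ^ q) ^ (s/b) := by
          simp_rw [e1, e2, one_div_div]
  have hstep1 : ∑ i ∈ t, f i ^ (L*r) * g i ^ ((1-L)*r)
      ≤ (∑ i ∈ t, (f i ^ (L*r) * g i ^ ((1-L)*r)) ^ s) ^ (1/s) :=
    mySumLeRpow t _ hs0 hs1
  calc (∑ i ∈ t, f i ^ (L*r) * g i ^ ((1-L)*r)) ^ (1/r)
      ≤ (((∑ i ∈ t, f i ^ p) ^ (s/a) * (∑ i ∈ t, g i ^ q) ^ (s/b)) ^ (1/s)) ^ (1/r) := by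
        gcongr
        exact hstep1.trans (by gcongr)
    _ = (∑ i ∈ t, f i ^ p) ^ (L/p) * (∑ i ∈ t, g i ^ q) ^ ((1-L)/q) := by
        rw [← NNReal.rpow_mul, NNReal.mul_rpow, ← NNReal.rpow_mul, ← NNReal.rpow_mul]
        congr 1
        · congr 1
          rw [ha_def]
          field_simp
        · congr 1
          rw [hb_def]
          field_simp

noncomputable def mixedNorm (m k : ℕ) (p q : ℝ) (x : Fin m → Fin k → ℝ) : ℝ :=
  (∑ j, (∑ i, |x i j| ^ p) ^ (q / p)) ^ (1 / q)

theorem stmt2 (m k : ℕ) (p₁ p₂ q₁ q₂ : ℝ)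
    (hp1 : 2 ≤ p₁) (hp : p₁ ≤ p₂) (hq1 : 2 ≤ q₁) (hq : q₁ ≤ q₂)
    (lamP lamQ : ℝ)
    (hlamP : lamP = if p₂ = 2 then 1 else (1/p₁ - 1/p₂) / (1/2 - 1/p₂))
    (hlamQ : lamQ = if q₂ = 2 then 1 else (1/q₁ - 1/q₂) / (1/2 - 1/q₂))
    (hle : lamP ≤ lamQ)
    (x : Fin m → Fin k → ℝ) :
    mixedNorm m k (p₁/(p₁-1)) (q₁/(q₁-1)) x ≤
      mixedNorm m k 2 2 x ^ lamP *
        mixedNorm m k (p₂/(p₂-1)) (q₂/(q₂-1)) x ^ (1 - lamP) := by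
  have hp2 : (2:ℝ) ≤ p₂ := hp1.trans hp
  have hq2 : (2:ℝ) ≤ q₂ := hq1.trans hq
  have hp₁1 : (0:ℝ) < p₁ - 1 := by linarith
  have hp₂1 : (0:ℝ) < p₂ - 1 := by linarith
  have hq₁1 : (0:ℝ) < q₁ - 1 := by linarith
  have hq₂1 : (0:ℝ) < q₂ - 1 := by linarith
  have hp₁0 : (0:ℝ) < p₁ := by linarith
  have hp₂0 : (0:ℝ) < p₂ := by linarith
  have hq₁0 : (0:ℝ) < q₁ := by linarith
  have hq₂0 : (0:ℝ) < q₂ := by linarith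
  have hP1 : (0:ℝ) < p₁/(p₁-1) := div_pos hp₁0 hp₁1
  have hP2 : (0:ℝ) < p₂/(p₂-1) := div_pos hp₂0 hp₂1
  have hQ1 : (0:ℝ) < q₁/(q₁-1) := div_pos hq₁0 hq₁1
  have hQ2 : (0:ℝ) < q₂/(q₂-1) := div_pos hq₂0 hq₂1
  -- bounds for lamP
  have hL0 : 0 ≤ lamP := by
    by_cases hc : p₂ = 2
    · rw [hlamP, if_pos hc]; norm_num
    · have h2 : (2:ℝ) < p₂ := lt_of_le_of_ne hp2 (Ne.symm hc)
      rw [hlamP, if_neg hc]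
      apply div_nonneg
      · rw [sub_nonneg]
        exact one_div_le_one_div_of_le hp₁0 hp
      · rw [sub_nonneg]
        exact one_div_le_one_div_of_le (by norm_num) hp2
  have hL1 : lamP ≤ 1 := by
    by_cases hc : p₂ = 2
    · rw [hlamP, if_pos hc]
    · have h2 : (2:ℝ) < p₂ := lt_of_le_of_ne hp2 (Ne.symm hc)
      rw [hlamP, if_neg hc]
      have hd : (0:ℝ) < 1/2 - 1/p₂ := by
        rw [sub_pos]
        exact one_div_lt_one_div_of_lt (by norm_num) h2
      rw [div_le_one hd]
      have : 1/p₁ ≤ 1/2 := one_div_le_one_div_of_le (by norm_num) hp1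
      linarith
  -- condition A
  have condA : 1 ≤ lamP * (p₁/(p₁-1)) / 2 + (1 - lamP) * (p₁/(p₁-1)) / (p₂/(p₂-1)) := by
    by_cases hc : p₂ = 2
    · have hp₁2 : p₁ = 2 := le_antisymm (hp.trans_eq hc) hp1
      rw [hlamP, if_pos hc]
      subst hp₁2
      subst hc
      norm_num
    · have h2 : (2:ℝ) < p₂ := lt_of_le_of_ne hp2 (Ne.symm hc)
      have hd : (0:ℝ) < 1/2 - 1/p₂ := by
        rw [sub_pos]
        exact one_div_lt_one_div_of_lt (by norm_num) h2
      rw [hlamP, if_neg hc]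
      apply le_of_eq
      have h2a : p₂ - 2 ≠ 0 := sub_ne_zero_of_ne hc
      have h2b : (2:ℝ) - p₂ ≠ 0 := sub_ne_zero_of_ne (fun h => hc h.symm)
      field_simp [h2a, h2b, hd.ne', hp₁1.ne', hp₂1.ne', hp₁0.ne', hp₂0.ne']
      ring
  -- condition B
  have condB : 1 ≤ lamP * (q₁/(q₁-1)) / 2 + (1 - lamP) * (q₁/(q₁-1)) / (q₂/(q₂-1)) := by
    by_cases hc : q₂ = 2
    · have hq₁2 : q₁ = 2 := le_antisymm (hq.trans_eq hc) hq1
      subst hq₁2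
      subst hc
      norm_num
    · have h2 : (2:ℝ) < q₂ := lt_of_le_of_ne hq2 (Ne.symm hc)
      have hd : (0:ℝ) < 1/2 - 1/q₂ := by
        rw [sub_pos]
        exact one_div_lt_one_div_of_lt (by norm_num) h2
      have hid : lamQ * (q₁/(q₁-1)) / 2 + (1 - lamQ) * (q₁/(q₁-1)) / (q₂/(q₂-1)) = 1 := by
        rw [hlamQ, if_neg hc]
        have h2a : q₂ - 2 ≠ 0 := sub_ne_zero_of_ne hc
        have h2b : (2:ℝ) - q₂ ≠ 0 := sub_ne_zero_of_ne (fun h => hc h.symm)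
        field_simp [h2a, h2b, hd.ne', hq₁1.ne', hq₂1.ne', hq₁0.ne', hq₂0.ne']
        ring
      have hd2 : q₂/(q₂-1) ≤ 2 := by
        rw [div_le_iff₀ hq₂1]; linarith
      have hinv2 : (1:ℝ)/2 ≤ 1/(q₂/(q₂-1)) := one_div_le_one_div_of_le hQ2 hd2
      have hkey : 0 ≤ (lamQ - lamP) * (q₁/(q₁-1)) * (1/(q₂/(q₂-1)) - 1/2) :=
        mul_nonneg (mul_nonneg (by linarith) hQ1.le) (by linarith)
      have hexp : (lamQ - lamP) * (q₁/(q₁-1)) * (1/(q₂/(q₂-1)) - 1/2)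
          = (lamP * (q₁/(q₁-1)) / 2 + (1 - lamP) * (q₁/(q₁-1)) / (q₂/(q₂-1)))
            - (lamQ * (q₁/(q₁-1)) / 2 + (1 - lamQ) * (q₁/(q₁-1)) / (q₂/(q₂-1))) := by
        field_simp
        ring
      linarith [hexp ▸ hkey]
  -- move to ℝ≥0
  set X : Fin m → Fin k → ℝ≥0 := fun i j => ‖x i j‖₊ with hX
  have hcoe : ∀ p q : ℝ, mixedNorm m k p q x
      = (((∑ j, (∑ i, X i j ^ p) ^ (q/p)) ^ (1/q) : ℝ≥0) : ℝ) := by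
    intro p q
    simp [mixedNorm, hX, NNReal.coe_rpow, NNReal.coe_sum, Real.norm_eq_abs]
  rw [hcoe, hcoe, hcoe, ← NNReal.coe_rpow, ← NNReal.coe_rpow, ← NNReal.coe_mul,
    NNReal.coe_le_coe]
  have stepA : ∀ j, (∑ i, X i j ^ (p₁/(p₁-1))) ^ ((1:ℝ)/(p₁/(p₁-1)))
      ≤ (∑ i, X i j ^ (2:ℝ)) ^ (lamP/2)
        * (∑ i, X i j ^ (p₂/(p₂-1))) ^ ((1-lamP)/(p₂/(p₂-1))) := by
    intro j
    have h := myInterp Finset.univ (fun i => X i j) (fun i => X i j) lamP 2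
      (p₂/(p₂-1)) (p₁/(p₁-1)) hL0 hL1 (by norm_num) hP2 hP1 condA
    have e : ∀ i : Fin m, X i j ^ (lamP*(p₁/(p₁-1))) * X i j ^ ((1-lamP)*(p₁/(p₁-1)))
        = X i j ^ (p₁/(p₁-1)) := by
      intro i
      have hsum : lamP*(p₁/(p₁-1)) + (1-lamP)*(p₁/(p₁-1)) = p₁/(p₁-1) := by ring
      rw [← NNReal.rpow_add' (by rw [hsum]; exact hP1.ne'), hsum]
    simp_rw [e] at h
    exact h
  have hB := myInterp Finset.univ
    (fun j => (∑ i, X i j ^ (2:ℝ)) ^ ((1:ℝ)/2))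
    (fun j => (∑ i, X i j ^ (p₂/(p₂-1))) ^ ((1:ℝ)/(p₂/(p₂-1)))) lamP 2
    (q₂/(q₂-1)) (q₁/(q₁-1)) hL0 hL1 (by norm_num) hQ2 hQ1 condB
  calc (∑ j, (∑ i, X i j ^ (p₁/(p₁-1))) ^ ((q₁/(q₁-1))/(p₁/(p₁-1)))) ^ (1/(q₁/(q₁-1)))
      = (∑ j, ((∑ i, X i j ^ (p₁/(p₁-1))) ^ ((1:ℝ)/(p₁/(p₁-1)))) ^ (q₁/(q₁-1)))
          ^ (1/(q₁/(q₁-1))) := by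
        congr 1
        refine Finset.sum_congr rfl fun j _ => ?_
        rw [← NNReal.rpow_mul, one_div_mul_eq_div]
    _ ≤ (∑ j, ((∑ i, X i j ^ (2:ℝ)) ^ (lamP/2)
          * (∑ i, X i j ^ (p₂/(p₂-1))) ^ ((1-lamP)/(p₂/(p₂-1)))) ^ (q₁/(q₁-1)))
          ^ (1/(q₁/(q₁-1))) := by
        gcongr with j hj
        exact stepA j
    _ = (∑ j, ((∑ i, X i j ^ (2:ℝ)) ^ ((1:ℝ)/2)) ^ (lamP*(q₁/(q₁-1)))
          * ((∑ i, X i j ^ (p₂/(p₂-1))) ^ ((1:ℝ)/(p₂/(p₂-1)))) ^ ((1-lamP)*(q₁/(q₁-1))))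
          ^ (1/(q₁/(q₁-1))) := by
        congr 1
        refine Finset.sum_congr rfl fun j _ => ?_
        rw [NNReal.mul_rpow, ← NNReal.rpow_mul, ← NNReal.rpow_mul, ← NNReal.rpow_mul,
          ← NNReal.rpow_mul]
        congr 1
        · congr 1; ring
        · congr 1; ring
    _ ≤ (∑ j, ((∑ i, X i j ^ (2:ℝ)) ^ ((1:ℝ)/2)) ^ (2:ℝ)) ^ (lamP/2)
          * (∑ j, ((∑ i, X i j ^ (p₂/(p₂-1))) ^ ((1:ℝ)/(p₂/(p₂-1)))) ^ (q₂/(q₂-1)))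
            ^ ((1-lamP)/(q₂/(q₂-1))) := hB
    _ = ((∑ j, (∑ i, X i j ^ (2:ℝ)) ^ ((2:ℝ)/2)) ^ (1/(2:ℝ))) ^ lamP
          * ((∑ j, (∑ i, X i j ^ (p₂/(p₂-1))) ^ ((q₂/(q₂-1))/(p₂/(p₂-1))))
            ^ (1/(q₂/(q₂-1)))) ^ (1-lamP) := by
        congr 1
        · rw [← NNReal.rpow_mul]
          congr 1
          · refine Finset.sum_congr rfl fun j _ => ?_
            rw [← NNReal.rpow_mul]
            norm_num
          · ring
        · rw [← NNReal.rpow_mul]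
          congr 1
          · refine Finset.sum_congr rfl fun j _ => ?_
            rw [← NNReal.rpow_mul, one_div_mul_eq_div]
          · rw [one_div_mul_eq_div]
end

section
/- Let $2\le p_1\le p_2<\infty$, $2\le q_1\le q_2<\infty$, with $\lambda(\mathbf q)=(\frac{1}{q_1}-\frac{1}{q_2})/(\frac12-\frac{1}{q_2})$ when $q_2>2$ (and $=1$ if $q_2=2$), and $\lambda(\mathbf p)\ge\lambda(\mathbf q)$. Then for every matrix $x=(x_{ij})_{1\le i\le m,1\le j\le k}$ we have $\|x\|_{l^{m,k}_{p_1',q_1'}} \le \|x\|_{l^{m,k}_{2,2}}^{\lambda(\mathbf q)}\, \|x\|_{l^{m,k}_{p_2',q_2'}}^{1-\lambda(\mathbf q)}$. -/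
open Finset Real

/-- Sum of geometric means is at most geometric mean of sums. -/
lemma aux_sum_geom_mean_le {ι : Type*} (s : Finset ι) (f g : ι → ℝ)
    (hf : ∀ i ∈ s, 0 ≤ f i) (hg : ∀ i ∈ s, 0 ≤ g i) {θ : ℝ} (h0 : 0 ≤ θ) (h1 : θ ≤ 1) :
    ∑ i ∈ s, f i ^ θ * g i ^ (1 - θ) ≤ (∑ i ∈ s, f i) ^ θ * (∑ i ∈ s, g i) ^ (1 - θ) := by
  rcases eq_or_lt_of_le h0 with rfl | h0'
  · simp
  rcases eq_or_lt_of_le h1 with rfl | h1'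
  · simp
  have hpq : Real.HolderConjugate (1/θ) (1/(1-θ)) := by
    exact Real.holderConjugate_one_div h0' (by linarith) (by ring)
  have key := Real.inner_le_Lp_mul_Lq_of_nonneg (f := fun i => f i ^ θ)
    (g := fun i => g i ^ (1-θ)) s hpq
    (fun i hi => Real.rpow_nonneg (hf i hi) _) (fun i hi => Real.rpow_nonneg (hg i hi) _)
  calc ∑ i ∈ s, f i ^ θ * g i ^ (1 - θ)
      ≤ (∑ i ∈ s, (f i ^ θ) ^ (1/θ)) ^ (1 / (1/θ)) *
        (∑ i ∈ s, (g i ^ (1-θ)) ^ (1/(1-θ))) ^ (1 / (1/(1-θ))) := key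
    _ = (∑ i ∈ s, f i) ^ θ * (∑ i ∈ s, g i) ^ (1 - θ) := by
        rw [one_div_one_div, one_div_one_div]
        congr 2
        · apply Finset.sum_congr rfl
          intro i hi
          rw [← Real.rpow_mul (hf i hi), mul_one_div_cancel h0'.ne', Real.rpow_one]
        · apply Finset.sum_congr rfl
          intro i hi
          rw [← Real.rpow_mul (hg i hi), mul_one_div_cancel (by linarith : (1:ℝ)-θ ≠ 0),
            Real.rpow_one]

/-- `∑ g^t ≤ (∑ g)^t` for `t ≥ 1` and nonnegative `g`. -/
lemma aux_sum_rpow_le {ι : Type*} (s : Finset ι) (g : ι → ℝ)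
    (hg : ∀ i ∈ s, 0 ≤ g i) {t : ℝ} (ht : 1 ≤ t) :
    ∑ i ∈ s, g i ^ t ≤ (∑ i ∈ s, g i) ^ t := by
  have hS : 0 ≤ ∑ i ∈ s, g i := Finset.sum_nonneg hg
  have ht0 : (0:ℝ) < t := by linarith
  calc ∑ i ∈ s, g i ^ t ≤ ∑ i ∈ s, (∑ j ∈ s, g j) ^ (t-1) * g i := by
        apply Finset.sum_le_sum
        intro i hi
        have hgi : g i ≤ ∑ j ∈ s, g j := Finset.single_le_sum hg hi
        have ht' : t - 1 + 1 = t := by ring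
        have : g i ^ t = g i ^ (t-1) * g i := by
          calc g i ^ t = g i ^ (t - 1 + 1) := by rw [ht']
            _ = g i ^ (t-1) * g i ^ (1:ℝ) := Real.rpow_add' (hg i hi) (by rw [ht']; positivity)
            _ = g i ^ (t-1) * g i := by rw [Real.rpow_one]
        rw [this]
        exact mul_le_mul_of_nonneg_right
          (Real.rpow_le_rpow (hg i hi) hgi (by linarith)) (hg i hi)
    _ = (∑ i ∈ s, g i) ^ (t-1) * (∑ i ∈ s, g i) := by rw [← Finset.mul_sum]
    _ = (∑ i ∈ s, g i) ^ t := by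
        have ht' : t - 1 + 1 = t := by ring
        calc (∑ i ∈ s, g i) ^ (t-1) * (∑ i ∈ s, g i)
            = (∑ i ∈ s, g i) ^ (t-1) * (∑ i ∈ s, g i) ^ (1:ℝ) := by rw [Real.rpow_one]
          _ = (∑ i ∈ s, g i) ^ (t - 1 + 1) := (Real.rpow_add' hS (by rw [ht']; positivity)).symm
          _ = (∑ i ∈ s, g i) ^ t := by rw [ht']

/-- ℓᵖ-norm monotonicity on finite sums. -/
lemma aux_mono {ι : Type*} (s : Finset ι) (f : ι → ℝ) (hf : ∀ i ∈ s, 0 ≤ f i)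
    {a b : ℝ} (ha : 0 < a) (hab : a ≤ b) :
    (∑ i ∈ s, f i ^ b) ^ (1/b) ≤ (∑ i ∈ s, f i ^ a) ^ (1/a) := by
  have hb : 0 < b := lt_of_lt_of_le ha hab
  have h1 : ∑ i ∈ s, f i ^ b = ∑ i ∈ s, (f i ^ a) ^ (b/a) := by
    apply Finset.sum_congr rfl
    intro i hi
    rw [← Real.rpow_mul (hf i hi), mul_div_cancel₀ _ ha.ne']
  have h2 : ∑ i ∈ s, (f i ^ a) ^ (b/a) ≤ (∑ i ∈ s, f i ^ a) ^ (b/a) :=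
    aux_sum_rpow_le s _ (fun i hi => Real.rpow_nonneg (hf i hi) _)
      ((one_le_div ha).2 hab)
  have hSa : 0 ≤ ∑ i ∈ s, f i ^ a :=
    Finset.sum_nonneg fun i hi => Real.rpow_nonneg (hf i hi) _
  calc (∑ i ∈ s, f i ^ b) ^ (1/b)
      ≤ ((∑ i ∈ s, f i ^ a) ^ (b/a)) ^ (1/b) := by
        apply Real.rpow_le_rpow _ _ (by positivity)
        · rw [h1]
          exact Finset.sum_nonneg fun i hi => Real.rpow_nonneg (Real.rpow_nonneg (hf i hi) _) _
        · rw [h1]; exact h2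
    _ = (∑ i ∈ s, f i ^ a) ^ (1/a) := by
        rw [← Real.rpow_mul hSa]
        congr 1
        field_simp

/-- Interpolation (Hölder) step for two sequences. -/
lemma aux_out {ι : Type*} (s : Finset ι) (A B : ι → ℝ)
    (hA : ∀ i ∈ s, 0 ≤ A i) (hB : ∀ i ∈ s, 0 ≤ B i)
    {lam a b c : ℝ} (hl0 : 0 ≤ lam) (hl1 : lam ≤ 1)
    (ha : 0 < a) (hb : 0 < b) (hc : 0 < c)
    (hcc : 1/c = lam/a + (1-lam)/b) :
    (∑ i ∈ s, (A i ^ lam * B i ^ (1-lam)) ^ c) ^ (1/c) ≤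
      (∑ i ∈ s, A i ^ a) ^ (lam/a) * (∑ i ∈ s, B i ^ b) ^ ((1-lam)/b) := by
  set θ : ℝ := c * lam / a with hθdef
  have hθ0 : 0 ≤ θ := by positivity
  have hθsum : θ + c * (1-lam) / b = 1 := by
    have : c * (1/c) = 1 := mul_one_div_cancel hc.ne'
    rw [hcc] at this
    rw [hθdef]
    linear_combination this
  have hθ1 : θ ≤ 1 := by
    have h2 : 0 ≤ c * (1-lam) / b := div_nonneg (mul_nonneg hc.le (by linarith)) hb.le
    linarith
  have hterm : ∀ i ∈ s, (A i ^ lam * B i ^ (1-lam)) ^ c =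
      (A i ^ a) ^ θ * (B i ^ b) ^ (1 - θ) := by
    intro i hi
    rw [Real.mul_rpow (Real.rpow_nonneg (hA i hi) _) (Real.rpow_nonneg (hB i hi) _),
      ← Real.rpow_mul (hA i hi), ← Real.rpow_mul (hA i hi), ← Real.rpow_mul (hB i hi),
      ← Real.rpow_mul (hB i hi)]
    congr 2
    · rw [hθdef]; field_simp
    · have : 1 - θ = c * (1-lam) / b := by linarith
      rw [this]; field_simp
  have hG := aux_sum_geom_mean_le s (fun i => A i ^ a) (fun i => B i ^ b)
    (fun i hi => Real.rpow_nonneg (hA i hi) _) (fun i hi => Real.rpow_nonneg (hB i hi) _)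
    hθ0 hθ1
  have hSA : 0 ≤ ∑ i ∈ s, A i ^ a :=
    Finset.sum_nonneg fun i hi => Real.rpow_nonneg (hA i hi) _
  have hSB : 0 ≤ ∑ i ∈ s, B i ^ b :=
    Finset.sum_nonneg fun i hi => Real.rpow_nonneg (hB i hi) _
  calc (∑ i ∈ s, (A i ^ lam * B i ^ (1-lam)) ^ c) ^ (1/c)
      = (∑ i ∈ s, (A i ^ a) ^ θ * (B i ^ b) ^ (1-θ)) ^ (1/c) := by
        congr 1; exact Finset.sum_congr rfl hterm
    _ ≤ ((∑ i ∈ s, A i ^ a) ^ θ * (∑ i ∈ s, B i ^ b) ^ (1-θ)) ^ (1/c) := by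
        apply Real.rpow_le_rpow _ hG (by positivity)
        exact Finset.sum_nonneg fun i hi =>
          mul_nonneg (Real.rpow_nonneg (Real.rpow_nonneg (hA i hi) _) _)
            (Real.rpow_nonneg (Real.rpow_nonneg (hB i hi) _) _)
    _ = (∑ i ∈ s, A i ^ a) ^ (lam/a) * (∑ i ∈ s, B i ^ b) ^ ((1-lam)/b) := by
        rw [Real.mul_rpow (Real.rpow_nonneg hSA _) (Real.rpow_nonneg hSB _),
          ← Real.rpow_mul hSA, ← Real.rpow_mul hSB]
        congr 2
        · rw [hθdef]; field_simp
        · have : 1 - θ = c * (1-lam) / b := by linarith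
          rw [this]; field_simp

/-- Inner step: Lyapunov interpolation + monotonicity of ℓᵖ norms. -/
lemma aux_inner {ι : Type*} (s : Finset ι) (f : ι → ℝ) (hf : ∀ i ∈ s, 0 ≤ f i)
    {lam s₁ s₂ : ℝ} (hl0 : 0 ≤ lam) (hl1 : lam ≤ 1)
    (hs₁ : 0 < s₁) (hs₂ : 0 < s₂)
    (hkey : 1/s₁ ≤ lam/2 + (1-lam)/s₂) :
    (∑ i ∈ s, f i ^ s₁) ^ (1/s₁) ≤
      ((∑ i ∈ s, f i ^ (2:ℝ)) ^ ((1:ℝ)/2)) ^ lam * ((∑ i ∈ s, f i ^ s₂) ^ (1/s₂)) ^ (1-lam) := by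
  have hrpos : 0 < lam/2 + (1-lam)/s₂ := by
    rcases eq_or_lt_of_le hl0 with rfl | h
    · simpa using inv_pos.2 hs₂
    · have h2 : (0:ℝ) ≤ (1-lam)/s₂ := div_nonneg (by linarith) hs₂.le
      linarith [half_pos h]
  set r : ℝ := (lam/2 + (1-lam)/s₂)⁻¹ with hrdef
  have hr : 0 < r := by positivity
  have hrinv : 1/r = lam/2 + (1-lam)/s₂ := by rw [hrdef, one_div, inv_inv]
  have hrs₁ : r ≤ s₁ := by
    have h2 : 1/s₁ ≤ 1/r := by rw [hrinv]; exact hkey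
    exact le_of_one_div_le_one_div hs₁ h2
  have step1 : (∑ i ∈ s, f i ^ s₁) ^ (1/s₁) ≤ (∑ i ∈ s, f i ^ r) ^ (1/r) :=
    aux_mono s f hf hr hrs₁
  have step2 : (∑ i ∈ s, f i ^ r) ^ (1/r) ≤
      (∑ i ∈ s, f i ^ (2:ℝ)) ^ (lam/2) * (∑ i ∈ s, f i ^ s₂) ^ ((1-lam)/s₂) := by
    have h := aux_out s f f hf hf hl0 hl1 (by norm_num : (0:ℝ) < 2) hs₂ hr hrinv
    calc (∑ i ∈ s, f i ^ r) ^ (1/r)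
        = (∑ i ∈ s, (f i ^ lam * f i ^ (1-lam)) ^ r) ^ (1/r) := by
          congr 1
          apply Finset.sum_congr rfl
          intro i hi
          congr 1
          rw [← Real.rpow_add' (hf i hi) (by norm_num), add_sub_cancel, Real.rpow_one]
      _ ≤ _ := h
  have e2 : (∑ i ∈ s, f i ^ (2:ℝ)) ^ (lam/2) =
      ((∑ i ∈ s, f i ^ (2:ℝ)) ^ ((1:ℝ)/2)) ^ lam := by
    rw [← Real.rpow_mul (Finset.sum_nonneg fun i hi => Real.rpow_nonneg (hf i hi) _)]
    congr 1
    ring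
  have e3 : (∑ i ∈ s, f i ^ s₂) ^ ((1-lam)/s₂) =
      ((∑ i ∈ s, f i ^ s₂) ^ (1/s₂)) ^ (1-lam) := by
    rw [← Real.rpow_mul (Finset.sum_nonneg fun i hi => Real.rpow_nonneg (hf i hi) _)]
    congr 1
    ring
  calc (∑ i ∈ s, f i ^ s₁) ^ (1/s₁) ≤ (∑ i ∈ s, f i ^ r) ^ (1/r) := step1
    _ ≤ (∑ i ∈ s, f i ^ (2:ℝ)) ^ (lam/2) * (∑ i ∈ s, f i ^ s₂) ^ ((1-lam)/s₂) := step2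
    _ = _ := by rw [e2, e3]

theorem stmt3 (m k : ℕ) (p₁ p₂ q₁ q₂ : ℝ)
    (hp1 : 2 ≤ p₁) (hp : p₁ ≤ p₂) (hq1 : 2 ≤ q₁) (hq : q₁ ≤ q₂)
    (lamP lamQ : ℝ)
    (hlamP : lamP = if p₂ = 2 then 1 else (1/p₁ - 1/p₂) / (1/2 - 1/p₂))
    (hlamQ : lamQ = if q₂ = 2 then 1 else (1/q₁ - 1/q₂) / (1/2 - 1/q₂))
    (hle : lamQ ≤ lamP)
    (x : Fin m → Fin k → ℝ) :
    mixedNorm m k (p₁/(p₁-1)) (q₁/(q₁-1)) x ≤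
      mixedNorm m k 2 2 x ^ lamQ *
        mixedNorm m k (p₂/(p₂-1)) (q₂/(q₂-1)) x ^ (1 - lamQ) := by
  have hp22 : (2:ℝ) ≤ p₂ := hp1.trans hp
  have hq22 : (2:ℝ) ≤ q₂ := hq1.trans hq
  have hp10 : (0:ℝ) < p₁ := by linarith
  have hp20 : (0:ℝ) < p₂ := by linarith
  have hq10 : (0:ℝ) < q₁ := by linarith
  have hq20 : (0:ℝ) < q₂ := by linarith
  set P1 : ℝ := p₁/(p₁-1) with hP1def
  set P2 : ℝ := p₂/(p₂-1) with hP2def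
  set Q1 : ℝ := q₁/(q₁-1) with hQ1def
  set Q2 : ℝ := q₂/(q₂-1) with hQ2def
  have hP1 : 0 < P1 := div_pos hp10 (by linarith)
  have hP2 : 0 < P2 := div_pos hp20 (by linarith)
  have hQ1 : 0 < Q1 := div_pos hq10 (by linarith)
  have hQ2 : 0 < Q2 := div_pos hq20 (by linarith)
  have hP1inv : 1/P1 = 1 - 1/p₁ := by
    rw [hP1def, one_div_div]; field_simp
  have hP2inv : 1/P2 = 1 - 1/p₂ := by
    rw [hP2def, one_div_div]; field_simp
  have hQ1inv : 1/Q1 = 1 - 1/q₁ := by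
    rw [hQ1def, one_div_div]; field_simp
  have hQ2inv : 1/Q2 = 1 - 1/q₂ := by
    rw [hQ2def, one_div_div]; field_simp
  have hl0 : 0 ≤ lamQ := by
    rw [hlamQ]; split_ifs with h
    · norm_num
    · have hgt : (2:ℝ) < q₂ := lt_of_le_of_ne hq22 (Ne.symm h)
      have h1 : 1/q₂ ≤ 1/q₁ := one_div_le_one_div_of_le hq10 hq
      have h2 : 1/q₂ < 1/2 := by
        rw [div_lt_div_iff₀ hq20 two_pos]; linarith
      apply div_nonneg <;> linarith
  have hl1 : lamQ ≤ 1 := by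
    rw [hlamQ]; split_ifs with h
    · exact le_refl 1
    · have hgt : (2:ℝ) < q₂ := lt_of_le_of_ne hq22 (Ne.symm h)
      have h2 : 1/q₂ < 1/2 := by
        rw [div_lt_div_iff₀ hq20 two_pos]; linarith
      have h3 : 1/q₁ ≤ 1/2 := one_div_le_one_div_of_le two_pos hq1
      rw [div_le_one (by linarith)]
      linarith
  have keyq : 1/q₁ = lamQ/2 + (1-lamQ)*(1/q₂) := by
    rw [hlamQ]; split_ifs with h
    · have hq12 : q₁ = 2 := le_antisymm (h ▸ hq) hq1
      rw [hq12, h]; norm_num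
    · have hgt : (2:ℝ) < q₂ := lt_of_le_of_ne hq22 (Ne.symm h)
      have h2 : 1/q₂ < 1/2 := by
        rw [div_lt_div_iff₀ hq20 two_pos]; linarith
      have hd : (1:ℝ)/2 - 1/q₂ ≠ 0 := by linarith
      have hL : ((1/q₁-1/q₂)/(1/2-1/q₂)) * (1/2 - 1/q₂) = 1/q₁ - 1/q₂ :=
        div_mul_cancel₀ _ hd
      linear_combination (-1 : ℝ) * hL
  have keyp : lamQ/2 + (1-lamQ)*(1/p₂) ≤ 1/p₁ := by
    rcases eq_or_lt_of_le hp22 with h2 | h2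
    · have hp12 : p₁ = 2 := le_antisymm (h2 ▸ hp) hp1
      rw [hp12, ← h2]; ring_nf; linarith
    · have hlamP' : lamP = (1/p₁ - 1/p₂)/(1/2 - 1/p₂) := by
        rw [hlamP, if_neg (by linarith : p₂ ≠ 2)]
      have hd : (0:ℝ) < 1/2 - 1/p₂ := by
        have : 1/p₂ < 1/2 := by rw [div_lt_div_iff₀ hp20 two_pos]; linarith
        linarith
      have h3 : lamQ * (1/2 - 1/p₂) ≤ 1/p₁ - 1/p₂ := by
        calc lamQ * (1/2-1/p₂) ≤ ((1/p₁-1/p₂)/(1/2-1/p₂)) * (1/2-1/p₂) := by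
              apply mul_le_mul_of_nonneg_right _ hd.le
              rw [← hlamP']; exact hle
          _ = 1/p₁ - 1/p₂ := div_mul_cancel₀ _ hd.ne'
      ring_nf at h3 ⊢
      linarith
  have hQeq : 1/Q1 = lamQ/2 + (1-lamQ)/Q2 := by
    have e : (1-lamQ)/Q2 = (1-lamQ)*(1/Q2) := by ring
    rw [hQ1inv, e, hQ2inv]
    linear_combination (-1 : ℝ) * keyq
  have hPle : 1/P1 ≤ lamQ/2 + (1-lamQ)/P2 := by
    have e : (1-lamQ)/P2 = (1-lamQ)*(1/P2) := by ring
    rw [hP1inv, e, hP2inv]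
    ring_nf at keyp ⊢
    linarith
  -- analytic part
  have hxnn : ∀ (a : ℝ) (j : Fin k), 0 ≤ ∑ i, |x i j| ^ a :=
    fun a j => Finset.sum_nonneg fun i _ => Real.rpow_nonneg (abs_nonneg _) _
  set A : Fin k → ℝ := fun j => (∑ i, |x i j| ^ (2:ℝ)) ^ ((1:ℝ)/2) with hAdef
  set B : Fin k → ℝ := fun j => (∑ i, |x i j| ^ P2) ^ (1/P2) with hBdef
  have hA : ∀ j, 0 ≤ A j := fun j => Real.rpow_nonneg (hxnn _ _) _
  have hB : ∀ j, 0 ≤ B j := fun j => Real.rpow_nonneg (hxnn _ _) _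
  have hinner : ∀ j : Fin k, (∑ i, |x i j| ^ P1) ^ (1/P1) ≤ A j ^ lamQ * B j ^ (1-lamQ) :=
    fun j => aux_inner Finset.univ (fun i => |x i j|) (fun i _ => abs_nonneg _)
      hl0 hl1 hP1 hP2 hPle
  simp only [mixedNorm]
  calc (∑ j, (∑ i, |x i j| ^ P1) ^ (Q1 / P1)) ^ (1 / Q1)
      = (∑ j, ((∑ i, |x i j| ^ P1) ^ (1/P1)) ^ Q1) ^ (1 / Q1) := by
        congr 1
        apply Finset.sum_congr rfl
        intro j _
        rw [← Real.rpow_mul (hxnn _ _), one_div_mul_eq_div]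
    _ ≤ (∑ j, (A j ^ lamQ * B j ^ (1-lamQ)) ^ Q1) ^ (1 / Q1) := by
        apply Real.rpow_le_rpow _ _ (by positivity)
        · exact Finset.sum_nonneg fun j _ =>
            Real.rpow_nonneg (Real.rpow_nonneg (hxnn _ _) _) _
        · apply Finset.sum_le_sum
          intro j _
          exact Real.rpow_le_rpow (Real.rpow_nonneg (hxnn _ _) _) (hinner j) hQ1.le
    _ ≤ (∑ j, A j ^ (2:ℝ)) ^ (lamQ/2) * (∑ j, B j ^ Q2) ^ ((1-lamQ)/Q2) :=
        aux_out Finset.univ A B (fun j _ => hA j) (fun j _ => hB j) hl0 hl1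
          two_pos hQ2 hQ1 hQeq
    _ = ((∑ j, (∑ i, |x i j| ^ (2:ℝ)) ^ ((2:ℝ)/2)) ^ (1/(2:ℝ))) ^ lamQ *
        ((∑ j, (∑ i, |x i j| ^ P2) ^ (Q2/P2)) ^ (1/Q2)) ^ (1-lamQ) := by
        have eA : ∀ j ∈ Finset.univ (α := Fin k),
            A j ^ (2:ℝ) = (∑ i, |x i j| ^ (2:ℝ)) ^ ((2:ℝ)/2) := by
          intro j _
          rw [hAdef]
          rw [← Real.rpow_mul (hxnn _ _)]
          norm_num
        have eB : ∀ j ∈ Finset.univ (α := Fin k),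
            B j ^ Q2 = (∑ i, |x i j| ^ P2) ^ (Q2/P2) := by
          intro j _
          rw [hBdef]
          rw [← Real.rpow_mul (hxnn _ _), one_div_mul_eq_div]
        rw [Finset.sum_congr rfl eA, Finset.sum_congr rfl eB,
          ← Real.rpow_mul (Finset.sum_nonneg fun j _ => Real.rpow_nonneg (hxnn _ _) _),
          ← Real.rpow_mul (Finset.sum_nonneg fun j _ => Real.rpow_nonneg (hxnn _ _) _),
          show (1:ℝ)/2 * lamQ = lamQ/2 by ring,
          show (1:ℝ)/Q2 * (1-lamQ) = (1-lamQ)/Q2 by ring]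
end

section
/- Let $2\le q<\infty$, $k\in\mathbb{N}$, and let $\mu = \lfloor (k^{1/(2q)})^{1/(1/2-1/(2q))} \rfloor = \lfloor k^{1/(q-1)} \rfloor$. Then there is a constant $C(q)$ (independent of $k$) such that for any nonincreasing sequence $a_1^*\ge a_2^*\ge\cdots\ge a_k^*\ge 0$: $\left(\sum_{j=1}^k (a_j^*)^q\right)^{1/q} \le \left(\sum_{j\le \mu}(a_j^*)^2\right)^{1/2} + C(q)\max_{\mu<j\le k} k^{1/(2q)}\, j^{1/(2q)}\, a_j^*$. -/
open scoped NNReal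

private lemma rpow_add_le (x y z : ℝ) (hx : 0 ≤ x) (hy : 0 ≤ y) (hz : 0 ≤ z) (hz1 : z ≤ 1) :
    (x + y) ^ z ≤ x ^ z + y ^ z := by
  have h := NNReal.rpow_add_le_add_rpow x.toNNReal y.toNNReal hz hz1
  rw [← Real.toNNReal_add hx hy] at h
  have h2 : (((x+y).toNNReal ^ z : ℝ≥0) : ℝ) ≤ ((x.toNNReal ^ z + y.toNNReal ^ z : ℝ≥0) : ℝ) :=
    by exact_mod_cast h
  simpa [NNReal.coe_rpow, Real.coe_toNNReal _ hx, Real.coe_toNNReal _ hy,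
    Real.coe_toNNReal _ (add_nonneg hx hy)] using h2

private lemma sum_inv_sqrt (n : ℕ) :
    ∑ j ∈ Finset.Icc 1 n, (Real.sqrt j)⁻¹ ≤ 2 * Real.sqrt n := by
  induction n with
  | zero => simp
  | succ n ih =>
    rw [Finset.sum_Icc_succ_top (by omega : 1 ≤ n+1)]
    have hx : (0:ℝ) ≤ Real.sqrt n := Real.sqrt_nonneg _
    have hy : (0:ℝ) < Real.sqrt (n+1) := Real.sqrt_pos.2 (by positivity)
    have hx2 : Real.sqrt n ^ 2 = n := Real.sq_sqrt (by positivity)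
    have hy2 : Real.sqrt (n+1) ^ 2 = (n:ℝ)+1 := Real.sq_sqrt (by positivity)
    have key : 2 * Real.sqrt n + (Real.sqrt (↑(n+1)))⁻¹ ≤ 2 * Real.sqrt (↑(n+1)) := by
      push_cast
      set x := Real.sqrt n with hxdef
      set y := Real.sqrt ((n:ℝ)+1) with hydef
      rw [← sub_nonneg]
      have heq : 2 * y - (2 * x + y⁻¹) = (2 * y ^ 2 - 2 * x * y - 1) / y := by
        field_simp
        ring
      rw [heq]
      apply div_nonneg _ hy.le
      nlinarith [sq_nonneg (x - y)]
    calc ∑ j ∈ Finset.Icc 1 n, (Real.sqrt j)⁻¹ + (Real.sqrt (↑(n+1)))⁻¹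
        ≤ 2 * Real.sqrt n + (Real.sqrt (↑(n+1)))⁻¹ := by linarith
      _ ≤ 2 * Real.sqrt (↑(n+1)) := key

private lemma sum_rpow_le_rpow_sum (q : ℝ) (hq : 2 ≤ q) (s : Finset ℕ) (a : ℕ → ℝ)
    (ha : ∀ j ∈ s, 0 ≤ a j) :
    ∑ j ∈ s, a j ^ q ≤ (∑ j ∈ s, a j ^ (2:ℝ)) ^ (q/2) := by
  set T := ∑ j ∈ s, a j ^ (2:ℝ) with hT
  have hT0 : 0 ≤ T := Finset.sum_nonneg fun j hj => Real.rpow_nonneg (ha j hj) _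
  have hq0 : (0:ℝ) < q := by linarith
  have key : ∀ j ∈ s, a j ^ q ≤ a j ^ (2:ℝ) * T ^ (q/2 - 1) := by
    intro j hj
    have haj := ha j hj
    have h1 : a j ^ (2:ℝ) ≤ T :=
      Finset.single_le_sum (fun i hi => Real.rpow_nonneg (ha i hi) _) hj
    have h2 : a j ^ q = a j ^ (2:ℝ) * a j ^ (q - 2) := by
      rw [← Real.rpow_add' haj (by linarith)]
      norm_num
    rw [h2]
    apply mul_le_mul_of_nonneg_left _ (Real.rpow_nonneg haj _)
    have h3 : a j ^ (q - 2) = (a j ^ (2:ℝ)) ^ ((q-2)/2) := by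
      rw [← Real.rpow_mul haj]
      congr 1
      field_simp
    rw [h3, show q/2 - 1 = (q-2)/2 by ring]
    exact Real.rpow_le_rpow (Real.rpow_nonneg haj _) h1 (by linarith)
  calc ∑ j ∈ s, a j ^ q ≤ ∑ j ∈ s, a j ^ (2:ℝ) * T ^ (q/2 - 1) := Finset.sum_le_sum key
    _ = T * T ^ (q/2 - 1) := by rw [← Finset.sum_mul]
    _ = T ^ (q/2) := by
        rw [← Real.rpow_one_add' hT0 (by intro h; nlinarith)]
        norm_num
theorem stmt10 (q : ℝ) (hq : 2 ≤ q) :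
    ∃ C : ℝ, 0 < C ∧ ∀ k : ℕ, 0 < k → ∀ a : ℕ → ℝ,
      (∀ j, 1 ≤ j → j ≤ k → 0 ≤ a j) →
      (∀ i j, 1 ≤ i → i ≤ j → j ≤ k → a j ≤ a i) →
      (∑ j ∈ Finset.Icc 1 k, a j ^ q) ^ (1/q) ≤
        (∑ j ∈ Finset.Icc 1 (⌊(k:ℝ) ^ (1/(q-1))⌋₊), a j ^ (2:ℝ)) ^ ((1:ℝ)/2) +
        C * ⨆ j ∈ Finset.Ioc (⌊(k:ℝ) ^ (1/(q-1))⌋₊) k,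
              (k:ℝ) ^ (1/(2*q)) * (j:ℝ) ^ (1/(2*q)) * a j := by
  refine ⟨2, by norm_num, ?_⟩
  intro k hk a ha _
  have hq0 : (0:ℝ) < q := by linarith
  have hqne : q ≠ 0 := ne_of_gt hq0
  set μ := ⌊(k:ℝ) ^ (1/(q-1))⌋₊ with hμ
  set g : ℕ → ℝ := fun j =>
    ⨆ _ : j ∈ Finset.Ioc μ k, (k:ℝ) ^ (1/(2*q)) * (j:ℝ) ^ (1/(2*q)) * a j with hg
  have hgoal : (⨆ j ∈ Finset.Ioc μ k, (k:ℝ) ^ (1/(2*q)) * (j:ℝ) ^ (1/(2*q)) * a j)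
      = ⨆ j, g j := rfl
  rw [hgoal]
  set M := ⨆ j, g j with hM
  set T := ∑ j ∈ Finset.Icc 1 μ, a j ^ (2:ℝ) with hT
  have hrpow2 : ∀ x : ℝ, x ^ (2:ℝ) = x ^ 2 := fun x => Real.rpow_two x
  have hT0 : 0 ≤ T := Finset.sum_nonneg fun j _ => by rw [hrpow2]; positivity
  have hg_mem : ∀ j ∈ Finset.Ioc μ k,
      g j = (k:ℝ) ^ (1/(2*q)) * (j:ℝ) ^ (1/(2*q)) * a j := fun j hj => ciSup_pos hj
  have hg_non : ∀ j, j ∉ Finset.Ioc μ k → g j = 0 := fun j hj =>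
    haveI := IsEmpty.mk hj
    Real.iSup_of_isEmpty _
  have hbdd : BddAbove (Set.range g) := by
    have hsub : Set.range g ⊆ insert (0:ℝ) ↑((Finset.Ioc μ k).image g) := by
      rintro x ⟨j, rfl⟩
      by_cases hj : j ∈ Finset.Ioc μ k
      · exact Set.mem_insert_iff.2 (Or.inr (by exact_mod_cast Finset.mem_image_of_mem g hj))
      · rw [hg_non j hj]; exact Set.mem_insert _ _
    exact ((Set.Finite.insert 0 (Finset.finite_toSet _)).bddAbove).mono hsub
  have hfM : ∀ j ∈ Finset.Ioc μ k,
      (k:ℝ) ^ (1/(2*q)) * (j:ℝ) ^ (1/(2*q)) * a j ≤ M := fun j hj =>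
    (hg_mem j hj) ▸ le_ciSup hbdd j
  rcases le_or_gt k μ with hcase | hcase
  · -- sup is empty, use ℓq ≤ ℓ2 on all of Icc 1 k
    have hempty : Finset.Ioc μ k = ∅ := Finset.Ioc_eq_empty (not_lt.2 hcase)
    have hM0 : M = 0 := by
      have hz : ∀ j, g j = 0 := fun j => hg_non j (by simp [hempty])
      rw [hM]
      simp [hz]
    rw [hM0, mul_zero, add_zero]
    have hanneg : ∀ j ∈ Finset.Icc 1 k, 0 ≤ a j := fun j hj =>
      ha j (Finset.mem_Icc.1 hj).1 (Finset.mem_Icc.1 hj).2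
    have h1 : ∑ j ∈ Finset.Icc 1 k, a j ^ q ≤ (∑ j ∈ Finset.Icc 1 k, a j ^ (2:ℝ)) ^ (q/2) :=
      sum_rpow_le_rpow_sum q hq _ a hanneg
    have h2 : ∑ j ∈ Finset.Icc 1 k, a j ^ (2:ℝ) ≤ T :=
      Finset.sum_le_sum_of_subset_of_nonneg (Finset.Icc_subset_Icc_right hcase)
        (fun j _ _ => by rw [hrpow2]; positivity)
    have hs20 : 0 ≤ ∑ j ∈ Finset.Icc 1 k, a j ^ (2:ℝ) :=
      Finset.sum_nonneg fun j _ => by rw [hrpow2]; positivity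
    calc (∑ j ∈ Finset.Icc 1 k, a j ^ q) ^ (1/q)
        ≤ ((∑ j ∈ Finset.Icc 1 k, a j ^ (2:ℝ)) ^ (q/2)) ^ (1/q) :=
          Real.rpow_le_rpow
            (Finset.sum_nonneg fun j hj => Real.rpow_nonneg (hanneg j hj) _) h1 (by positivity)
      _ = (∑ j ∈ Finset.Icc 1 k, a j ^ (2:ℝ)) ^ ((1:ℝ)/2) := by
          rw [← Real.rpow_mul hs20, show q/2 * (1/q) = (1:ℝ)/2 by field_simp]
      _ ≤ T ^ ((1:ℝ)/2) := Real.rpow_le_rpow hs20 h2 (by norm_num)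
  · -- main case
    have hM0 : 0 ≤ M := by
      have hk_mem : k ∈ Finset.Ioc μ k := Finset.mem_Ioc.2 ⟨hcase, le_refl k⟩
      have h0 : (0:ℝ) ≤ (k:ℝ) ^ (1/(2*q)) * (k:ℝ) ^ (1/(2*q)) * a k := by
        have := ha k (by omega) le_rfl
        positivity
      exact h0.trans (hfM k hk_mem)
    have hanneg : ∀ j ∈ Finset.Icc 1 k, 0 ≤ a j := fun j hj =>
      ha j (Finset.mem_Icc.1 hj).1 (Finset.mem_Icc.1 hj).2
    have hsplit : ∑ j ∈ Finset.Icc 1 k, a j ^ q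
        = ∑ j ∈ Finset.Icc 1 μ, a j ^ q + ∑ j ∈ Finset.Ioc μ k, a j ^ q := by
      have h01 : Finset.Icc 1 k = Finset.Ioc 0 k := by rw [← Finset.Icc_add_one_left_eq_Ioc]; rfl
      have h02 : Finset.Icc 1 μ = Finset.Ioc 0 μ := by rw [← Finset.Icc_add_one_left_eq_Ioc]; rfl
      rw [h01, h02, Finset.sum_Ioc_consecutive _ (Nat.zero_le μ) hcase.le]
    have hS1 : ∑ j ∈ Finset.Icc 1 μ, a j ^ q ≤ T ^ (q/2) :=
      sum_rpow_le_rpow_sum q hq _ a (fun j hj =>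
        ha j (Finset.mem_Icc.1 hj).1 ((Finset.mem_Icc.1 hj).2.trans hcase.le))
    have hskpos : (0:ℝ) < Real.sqrt k := Real.sqrt_pos.2 (by exact_mod_cast hk)
    have hS2 : ∑ j ∈ Finset.Ioc μ k, a j ^ q ≤ 2 * M ^ q := by
      have step : ∀ j ∈ Finset.Ioc μ k,
          a j ^ q ≤ M ^ q / Real.sqrt k * (Real.sqrt j)⁻¹ := by
        intro j hj
        obtain ⟨hj1, hj2⟩ := Finset.mem_Ioc.1 hj
        have hj1' : 1 ≤ j := by omega
        have haj : 0 ≤ a j := ha j hj1' hj2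
        have hkpos : (0:ℝ) < (k:ℝ) ^ (1/(2*q)) :=
          Real.rpow_pos_of_pos (by exact_mod_cast hk) _
        have hjpos : (0:ℝ) < (j:ℝ) ^ (1/(2*q)) :=
          Real.rpow_pos_of_pos (by exact_mod_cast hj1') _
        have hle : a j ≤ M / ((k:ℝ) ^ (1/(2*q)) * (j:ℝ) ^ (1/(2*q)))  := by
          rw [le_div_iff₀ (by positivity)]
          calc a j * ((k:ℝ) ^ (1/(2*q)) * (j:ℝ) ^ (1/(2*q)))
              = (k:ℝ) ^ (1/(2*q)) * (j:ℝ) ^ (1/(2*q)) * a j := by ring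
            _ ≤ M := hfM j hj
        have hsjpos : (0:ℝ) < Real.sqrt j := Real.sqrt_pos.2 (by exact_mod_cast hj1')
        calc a j ^ q ≤ (M / ((k:ℝ) ^ (1/(2*q)) * (j:ℝ) ^ (1/(2*q)))) ^ q :=
            Real.rpow_le_rpow haj hle hq0.le
          _ = M ^ q / Real.sqrt k * (Real.sqrt j)⁻¹ := by
            rw [Real.div_rpow hM0 (by positivity),
              Real.mul_rpow hkpos.le hjpos.le,
              ← Real.rpow_mul (Nat.cast_nonneg k), ← Real.rpow_mul (Nat.cast_nonneg j),
              show 1/(2*q) * q = (1:ℝ)/2 by field_simp,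
              ← Real.sqrt_eq_rpow, ← Real.sqrt_eq_rpow]
            field_simp
      have hsub : Finset.Ioc μ k ⊆ Finset.Icc 1 k := by
        intro j hj
        obtain ⟨hj1, hj2⟩ := Finset.mem_Ioc.1 hj
        exact Finset.mem_Icc.2 ⟨by omega, hj2⟩
      calc ∑ j ∈ Finset.Ioc μ k, a j ^ q
          ≤ ∑ j ∈ Finset.Ioc μ k, M ^ q / Real.sqrt k * (Real.sqrt j)⁻¹ :=
            Finset.sum_le_sum step
        _ ≤ ∑ j ∈ Finset.Icc 1 k, M ^ q / Real.sqrt k * (Real.sqrt j)⁻¹ :=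
            Finset.sum_le_sum_of_subset_of_nonneg hsub (fun j _ _ => by positivity)
        _ = M ^ q / Real.sqrt k * ∑ j ∈ Finset.Icc 1 k, (Real.sqrt j)⁻¹ := by
            rw [← Finset.mul_sum]
        _ ≤ M ^ q / Real.sqrt k * (2 * Real.sqrt k) := by
            apply mul_le_mul_of_nonneg_left (sum_inv_sqrt k) (by positivity)
        _ = 2 * M ^ q := by field_simp
    have hsum0 : 0 ≤ ∑ j ∈ Finset.Icc 1 k, a j ^ q :=
      Finset.sum_nonneg fun j hj => Real.rpow_nonneg (hanneg j hj) _
    have hqinv : 1/q ≤ (1:ℝ) := by rw [div_le_one hq0]; linarith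
    calc (∑ j ∈ Finset.Icc 1 k, a j ^ q) ^ (1/q)
        ≤ (T ^ (q/2) + 2 * M ^ q) ^ (1/q) :=
          Real.rpow_le_rpow hsum0 (by rw [hsplit]; linarith) (by positivity)
      _ ≤ (T ^ (q/2)) ^ (1/q) + (2 * M ^ q) ^ (1/q) :=
          rpow_add_le _ _ _ (Real.rpow_nonneg hT0 _) (by positivity) (by positivity) hqinv
      _ = T ^ ((1:ℝ)/2) + 2 ^ (1/q) * M := by
          rw [← Real.rpow_mul hT0, show q/2 * (1/q) = (1:ℝ)/2 by field_simp,
            Real.mul_rpow (by norm_num) (Real.rpow_nonneg hM0 _),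
            ← Real.rpow_mul hM0, show q * (1/q) = (1:ℝ) by field_simp, Real.rpow_one]
      _ ≤ T ^ ((1:ℝ)/2) + 2 * M := by
          have h21 : (2:ℝ) ^ (1/q) ≤ 2 ^ (1:ℝ) :=
            Real.rpow_le_rpow_of_exponent_le (by norm_num) hqinv
          rw [Real.rpow_one] at h21
          have := mul_le_mul_of_nonneg_right h21 hM0
          linarith
end
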